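/- Fix t > 0. The signature-based representation Pr(φ(χ(t))=1) = ∑_{k=1}^n (φ_{n−k+1} − φ_{n−k}) Pr(X_{k:n} > t), where φ_k = (1/C(n,k)) ∑_{|x|=k} φ(x) and φ_0 = 0, holds for every nondecreasing φ : {0,1}^n → {0,1} with φ(0)=0 and φ(1)=1, if and only if the indicator variables χ_1(t),...,χ_n(t) are exchangeable, i.e., Pr(χ(t) = x) = Pr(χ(t) = x') whenever |x| = |x'|. -/

import Mathlib

open Finset

def wt {n : ℕ} (x : Fin n → Bool) : ℕ := (Finset.univ.filter fun i => x i = true).card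

lemma wt_le {n : ℕ} (x : Fin n → Bool) : wt x ≤ n := by
  simpa [wt] using Finset.card_filter_le Finset.univ (fun i => x i = true)

lemma card_wt {n m : ℕ} :
    (Finset.univ.filter fun x : Fin n → Bool => wt x = m).card = n.choose m := by
  have h : ((Finset.univ : Finset (Fin n)).powersetCard m).card = n.choose m := by
    simp [Finset.card_powersetCard]
  rw [← h]
  apply Finset.card_nbij' (fun x => Finset.univ.filter fun i => x i = true)
    (fun s => fun i => decide (i ∈ s))
  · intro x hx
    simp only [Finset.mem_coe, Finset.mem_filter, Finset.mem_univ, true_and] at hx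
    simp [Finset.mem_powersetCard, ← hx, wt]
  · intro s hs
    simp only [Finset.mem_coe, Finset.mem_powersetCard] at hs
    rw [Finset.mem_coe, Finset.mem_filter]
    simp only [Finset.mem_filter, Finset.mem_univ, true_and, wt]
    rw [← hs.2]
    congr 1
    ext i; simp
  · intro x _
    funext i; simp
  · intro s _
    ext i; simp

lemma wt_mono {n : ℕ} {x y : Fin n → Bool} (h : ∀ i, x i ≤ y i) : wt x ≤ wt y := by
  apply Finset.card_le_card
  intro i hi
  simp only [Finset.mem_filter, Finset.mem_univ, true_and] at *
  exact Bool.le_iff_imp.mp (h i) hi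

lemma eq_of_le_wt {n : ℕ} {x y : Fin n → Bool} (h : ∀ i, x i ≤ y i) (hw : wt y = wt x) :
    y = x := by
  have hsub : (Finset.univ.filter fun i => x i = true) ⊆ (Finset.univ.filter fun i => y i = true) := by
    intro i hi
    simp only [Finset.mem_filter, Finset.mem_univ, true_and] at *
    exact Bool.le_iff_imp.mp (h i) hi
  have heq := Finset.eq_of_subset_of_card_le hsub (le_of_eq hw)
  funext i
  have hmem : (i ∈ Finset.univ.filter fun i => x i = true) ↔ (i ∈ Finset.univ.filter fun i => y i = true) := by rw [heq]
  simp only [Finset.mem_filter, Finset.mem_univ, true_and] at hmem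
  cases hx : x i <;> cases hy : y i <;> simp_all

lemma wt_zero {n : ℕ} {x : Fin n → Bool} (h : wt x = 0) : x = fun _ => false := by
  rw [wt, Finset.card_eq_zero] at h
  funext i
  by_contra hc
  have hmem : i ∈ Finset.univ.filter fun i => x i = true := by
    simp only [Finset.mem_filter, Finset.mem_univ, true_and]
    cases hx : x i
    · exact absurd hx hc
    · rfl
  rw [h] at hmem; exact absurd hmem (Finset.notMem_empty i)

lemma wt_top {n : ℕ} {x : Fin n → Bool} (h : wt x = n) : x = fun _ => true := by
  have heq : (Finset.univ.filter fun i => x i = true) = (Finset.univ : Finset (Fin n)) := by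
    apply Finset.eq_of_subset_of_card_le (Finset.subset_univ _)
    rw [show (Finset.univ.filter fun i => x i = true).card = n from h, Finset.card_univ,
      Fintype.card_fin]
  funext i
  have : i ∈ Finset.univ.filter fun i => x i = true := by rw [heq]; exact Finset.mem_univ i
  simpa using this

lemma sum_fiber {n : ℕ} (f : (Fin n → Bool) → ℝ) (t : Finset ℕ) :
    ∑ x ∈ Finset.univ.filter (fun x : Fin n → Bool => wt x ∈ t), f x
      = ∑ m ∈ t, ∑ x ∈ Finset.univ.filter (fun x : Fin n → Bool => wt x = m), f x := by
  rw [← Finset.sum_fiberwise_of_maps_to (g := wt) (t := t)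
      (s := Finset.univ.filter (fun x : Fin n → Bool => wt x ∈ t))
      (fun x hx => by simpa using (Finset.mem_filter.mp hx).2) f]
  apply Finset.sum_congr rfl
  intro m hm
  apply Finset.sum_congr _ (fun _ _ => rfl)
  ext x
  simp only [Finset.mem_filter, Finset.mem_univ, true_and, and_iff_right_iff_imp]
  rintro rfl; exact hm

lemma rhs_eq (n : ℕ) (p : (Fin n → Bool) → ℝ) (φ : (Fin n → Bool) → Bool)
    (h0 : φ (fun _ => false) = false) :
    (∑ k ∈ Finset.Icc 1 n,
      (((n.choose (n-k+1) : ℝ))⁻¹ *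
          (∑ x ∈ Finset.univ.filter (fun x : Fin n → Bool => wt x = n-k+1),
            (if φ x then (1:ℝ) else 0))
       - ((n.choose (n-k) : ℝ))⁻¹ *
          (∑ x ∈ Finset.univ.filter (fun x : Fin n → Bool => wt x = n-k),
            (if φ x then (1:ℝ) else 0)))
      * (∑ x ∈ Finset.univ.filter (fun x : Fin n → Bool => n+1-k ≤ wt x), p x))
    = ∑ x ∈ Finset.univ, (if φ x then (1:ℝ) else 0) *
        ((n.choose (wt x) : ℝ)⁻¹ *
          ∑ y ∈ Finset.univ.filter (fun y : Fin n → Bool => wt y = wt x), p y) := by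
  classical
  set b : ℕ → ℝ := fun j => (n.choose j : ℝ)⁻¹ *
    ∑ x ∈ Finset.univ.filter (fun x : Fin n → Bool => wt x = j), (if φ x then (1:ℝ) else 0)
    with hb
  set P : ℕ → ℝ := fun m => ∑ x ∈ Finset.univ.filter (fun x : Fin n → Bool => wt x = m), p x
    with hP
  set Q : ℕ → ℝ := fun j => ∑ x ∈ Finset.univ.filter (fun x : Fin n → Bool => j ≤ wt x), p x
    with hQ
  have hb0 : b 0 = 0 := by
    have hfib : (Finset.univ.filter (fun x : Fin n → Bool => wt x = 0))
        = {fun _ => false} := by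
      ext x
      simp only [Finset.mem_filter, Finset.mem_univ, true_and, Finset.mem_singleton]
      constructor
      · exact wt_zero
      · rintro rfl; simp [wt]
    simp [hb, hfib, Finset.filter_singleton, h0]
  -- step 1 : reindex
  have step1 : (∑ k ∈ Finset.Icc 1 n,
      (((n.choose (n-k+1) : ℝ))⁻¹ *
          (∑ x ∈ Finset.univ.filter (fun x : Fin n → Bool => wt x = n-k+1),
            (if φ x then (1:ℝ) else 0))
       - ((n.choose (n-k) : ℝ))⁻¹ *
          (∑ x ∈ Finset.univ.filter (fun x : Fin n → Bool => wt x = n-k),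
            (if φ x then (1:ℝ) else 0)))
      * (∑ x ∈ Finset.univ.filter (fun x : Fin n → Bool => n+1-k ≤ wt x), p x))
      = ∑ j ∈ Finset.Icc 1 n, (b j - b (j-1)) * Q j := by
    apply Finset.sum_nbij' (i := fun k => n + 1 - k) (j := fun k => n + 1 - k)
    · intro a ha; simp only [Finset.mem_Icc] at *; omega
    · intro a ha; simp only [Finset.mem_Icc] at *; omega
    · intro a ha; simp only [Finset.mem_Icc] at ha; omega
    · intro a ha; simp only [Finset.mem_Icc] at ha; omega
    · intro k hk
      simp only [Finset.mem_Icc] at hk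
      have e1 : n - k + 1 = n + 1 - k := by omega
      have e2 : n - k = (n + 1 - k) - 1 := by omega
      rw [e1, e2]
  rw [step1]
  -- step 2 : Q j = ∑ m ∈ Icc j n, P m
  have step2 : ∀ j, Q j = ∑ m ∈ Finset.Icc j n, P m := by
    intro j
    have : (Finset.univ.filter (fun x : Fin n → Bool => j ≤ wt x))
        = Finset.univ.filter (fun x : Fin n → Bool => wt x ∈ Finset.Icc j n) := by
      apply Finset.filter_congr
      intro x _
      simp only [Finset.mem_Icc, eq_iff_iff]
      exact ⟨fun h => ⟨h, wt_le x⟩, fun h => h.1⟩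
    rw [hQ]
    simp only [this]
    exact sum_fiber p (Finset.Icc j n)
  -- step 3+4 : swap and telescope
  have step3 : ∑ j ∈ Finset.Icc 1 n, (b j - b (j-1)) * Q j
      = ∑ m ∈ Finset.Icc 1 n, b m * P m := by
    calc ∑ j ∈ Finset.Icc 1 n, (b j - b (j-1)) * Q j
        = ∑ j ∈ Finset.Icc 1 n, ∑ m ∈ Finset.Icc j n, (b j - b (j-1)) * P m := by
          apply Finset.sum_congr rfl; intro j _
          rw [step2, Finset.mul_sum]
      _ = ∑ m ∈ Finset.Icc 1 n, ∑ j ∈ Finset.Icc 1 m, (b j - b (j-1)) * P m := by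
          apply Finset.sum_comm'
          intro j m
          simp only [Finset.mem_Icc]
          omega
      _ = ∑ m ∈ Finset.Icc 1 n, b m * P m := by
          apply Finset.sum_congr rfl; intro m _
          rw [← Finset.sum_mul]
          congr 1
          have htel : ∑ j ∈ Finset.Icc 1 m, (b j - b (j-1))
              = ∑ i ∈ Finset.range m, (b (i+1) - b i) := by
            apply Finset.sum_nbij' (i := fun j => j - 1) (j := fun i => i + 1)
            · intro a ha; simp only [Finset.mem_Icc, Finset.mem_range] at *; omega
            · intro a ha; simp only [Finset.mem_Icc, Finset.mem_range] at *; omega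
            · intro a ha; simp only [Finset.mem_Icc] at ha; omega
            · intro a _; omega
            · intro j hj
              simp only [Finset.mem_Icc] at hj
              have : j - 1 + 1 = j := by omega
              rw [this]
          rw [htel, Finset.sum_range_sub b, hb0, sub_zero]
  rw [step3]
  -- step 5 : regroup by x
  have step5 : ∑ m ∈ Finset.Icc 1 n, b m * P m
      = ∑ x ∈ Finset.univ.filter (fun x : Fin n → Bool => wt x ∈ Finset.Icc 1 n),
          (if φ x then (1:ℝ) else 0) *
            ((n.choose (wt x) : ℝ)⁻¹ *
              ∑ y ∈ Finset.univ.filter (fun y : Fin n → Bool => wt y = wt x), p y) := by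
    rw [sum_fiber]
    apply Finset.sum_congr rfl
    intro m _
    simp only [hb, hP]
    rw [mul_comm ((n.choose m : ℝ)⁻¹) _, mul_assoc, Finset.sum_mul]
    apply Finset.sum_congr rfl
    intro x hx
    have hwx : wt x = m := by simpa using (Finset.mem_filter.mp hx).2
    rw [hwx]
  rw [step5]
  -- extend filter to univ
  apply Finset.sum_filter_of_ne
  intro x _ hne
  simp only [Finset.mem_Icc]
  refine ⟨?_, wt_le x⟩
  by_contra hlt
  have : wt x = 0 := by omega
  have hx0 : x = fun _ => false := wt_zero this
  rw [hx0, h0] at hne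
  simp at hne

lemma sum_CP (n : ℕ) (p : (Fin n → Bool) → ℝ) (t : Finset ℕ) (ht : ∀ j ∈ t, j ≤ n) :
    ∑ y ∈ Finset.univ.filter (fun y : Fin n → Bool => wt y ∈ t),
      ((n.choose (wt y) : ℝ)⁻¹ *
        ∑ x ∈ Finset.univ.filter (fun x : Fin n → Bool => wt x = wt y), p x)
    = ∑ y ∈ Finset.univ.filter (fun y : Fin n → Bool => wt y ∈ t), p y := by
  rw [sum_fiber, sum_fiber]
  apply Finset.sum_congr rfl
  intro j hj
  have hcongr : ∀ y ∈ Finset.univ.filter (fun y : Fin n → Bool => wt y = j),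
      ((n.choose (wt y) : ℝ)⁻¹ *
        ∑ x ∈ Finset.univ.filter (fun x : Fin n → Bool => wt x = wt y), p x)
      = (n.choose j : ℝ)⁻¹ *
        ∑ x ∈ Finset.univ.filter (fun x : Fin n → Bool => wt x = j), p x := by
    intro y hy
    have : wt y = j := by simpa using (Finset.mem_filter.mp hy).2
    rw [this]
  rw [Finset.sum_congr rfl hcongr, Finset.sum_const, card_wt, nsmul_eq_mul, ← mul_assoc,
    mul_inv_cancel₀, one_mul]
  exact Nat.cast_ne_zero.mpr (Nat.choose_pos (ht j hj)).ne'

lemma point_eq (n : ℕ) (p : (Fin n → Bool) → ℝ)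
    (hp : ∀ x x' : Fin n → Bool, wt x = wt x' → p x = p x') (x : Fin n → Bool) :
    p x = (n.choose (wt x) : ℝ)⁻¹ *
      ∑ y ∈ Finset.univ.filter (fun y : Fin n → Bool => wt y = wt x), p y := by
  have hsum : ∑ y ∈ Finset.univ.filter (fun y : Fin n → Bool => wt y = wt x), p y
      = (n.choose (wt x) : ℝ) * p x := by
    rw [Finset.sum_congr rfl
      (fun y hy => hp y x (by simpa using (Finset.mem_filter.mp hy).2)),
      Finset.sum_const, card_wt, nsmul_eq_mul]
  rw [hsum, ← mul_assoc, inv_mul_cancel₀, one_mul]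
  exact Nat.cast_ne_zero.mpr (Nat.choose_pos (wt_le x)).ne'

lemma core (n : ℕ) (hn : 2 ≤ n) (p : (Fin n → Bool) → ℝ) :
    (∀ φ : (Fin n → Bool) → Bool,
        (∀ x y : Fin n → Bool, (∀ i, x i ≤ y i) → φ x ≤ φ y) →
        φ (fun _ => false) = false → φ (fun _ => true) = true →
        (∑ x ∈ Finset.univ.filter (fun x : Fin n → Bool => φ x = true), p x) =
          ∑ k ∈ Finset.Icc 1 n,
            (((n.choose (n-k+1) : ℝ))⁻¹ *
                (∑ x ∈ Finset.univ.filter (fun x : Fin n → Bool => wt x = n-k+1),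
                  (if φ x then (1:ℝ) else 0))
             - ((n.choose (n-k) : ℝ))⁻¹ *
                (∑ x ∈ Finset.univ.filter (fun x : Fin n → Bool => wt x = n-k),
                  (if φ x then (1:ℝ) else 0)))
            * (∑ x ∈ Finset.univ.filter (fun x : Fin n → Bool => n+1-k ≤ wt x), p x)) ↔
    (∀ x x' : Fin n → Bool, wt x = wt x' → p x = p x') := by
  constructor
  · -- identity → exchangeable
    intro H x x' hw
    by_cases h0x : wt x = 0
    · have h0x' : wt x' = 0 := by rw [← hw]; exact h0x
      rw [wt_zero h0x, wt_zero h0x']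
    · have key : ∀ z : Fin n → Bool, 1 ≤ wt z →
          p z = (n.choose (wt z) : ℝ)⁻¹ *
            ∑ y ∈ Finset.univ.filter (fun y : Fin n → Bool => wt y = wt z), p y := by
        intro z hz
        set m := wt z with hm
        set φz : (Fin n → Bool) → Bool :=
          fun y => (decide (m + 1 ≤ wt y) || decide (∀ i, z i ≤ y i)) with hφz
        have hmono : ∀ a c : Fin n → Bool, (∀ i, a i ≤ c i) → φz a ≤ φz c := by
          intro a c hac
          rw [Bool.le_iff_imp]
          simp only [hφz, Bool.or_eq_true, decide_eq_true_eq]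
          rintro (h | h)
          · exact Or.inl (le_trans h (wt_mono hac))
          · exact Or.inr (fun i => le_trans (h i) (hac i))
        have h0z : φz (fun _ => false) = false := by
          have hwf : wt (fun _ : Fin n => false) = 0 := by simp [wt]
          have hne : ¬ ∀ i, z i ≤ false := by
            intro hall
            have : z = fun _ => false := by
              funext i
              have := hall i
              revert this; cases z i <;> simp
            rw [hm, this] at hz
            simp [wt] at hz
          simp [hφz, hwf, hne]
        have h1z : φz (fun _ => true) = true := by
          simp [hφz]
        have hid := H φz hmono h0z h1z
        rw [rhs_eq n p φz h0z] at hid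
        set S := Finset.univ.filter (fun y : Fin n → Bool => m + 1 ≤ wt y) with hS
        have hznotin : z ∉ S := by simp [hS]; exact hm.ge
        have hset : Finset.univ.filter (fun y : Fin n → Bool => φz y = true)
            = insert z S := by
          ext y
          simp only [Finset.mem_filter, Finset.mem_univ, true_and, Finset.mem_insert, hS,
            hφz, Bool.or_eq_true, decide_eq_true_eq]
          constructor
          · rintro (h | h)
            · exact Or.inr h
            · rcases eq_or_lt_of_le (wt_mono h) with heq | hlt
              · exact Or.inl (eq_of_le_wt h heq.symm)
              · exact Or.inr (by omega)
          · rintro (rfl | h)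
            · exact Or.inr (fun i => le_refl _)
            · exact Or.inl h
        rw [hset, Finset.sum_insert hznotin] at hid
        have hrhs : ∑ y ∈ Finset.univ,
            (if φz y then (1:ℝ) else 0) *
              ((n.choose (wt y) : ℝ)⁻¹ *
                ∑ x ∈ Finset.univ.filter (fun x : Fin n → Bool => wt x = wt y), p x)
            = ((n.choose m : ℝ)⁻¹ *
                ∑ x ∈ Finset.univ.filter (fun x : Fin n → Bool => wt x = m), p x)
              + ∑ y ∈ S, p y := by
          have h1 : ∑ y ∈ Finset.univ,
              (if φz y then (1:ℝ) else 0) *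
                ((n.choose (wt y) : ℝ)⁻¹ *
                  ∑ x ∈ Finset.univ.filter (fun x : Fin n → Bool => wt x = wt y), p x)
              = ∑ y ∈ Finset.univ.filter (fun y : Fin n → Bool => φz y = true),
                  ((n.choose (wt y) : ℝ)⁻¹ *
                    ∑ x ∈ Finset.univ.filter (fun x : Fin n → Bool => wt x = wt y), p x) := by
            rw [Finset.sum_filter]
            apply Finset.sum_congr rfl
            intro y _
            cases φz y <;> simp
          rw [h1, hset, Finset.sum_insert hznotin, ← hm]
          congr 1
          have hSfib : S = Finset.univ.filter
              (fun y : Fin n → Bool => wt y ∈ Finset.Icc (m+1) n) := by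
            apply Finset.filter_congr
            intro y _
            simp only [Finset.mem_Icc, eq_iff_iff]
            exact ⟨fun h => ⟨h, wt_le y⟩, fun h => h.1⟩
          rw [hSfib]
          exact sum_CP n p (Finset.Icc (m+1) n) (fun j hj => (Finset.mem_Icc.mp hj).2)
        rw [hrhs] at hid
        linarith
      have h1x : 1 ≤ wt x := Nat.one_le_iff_ne_zero.mpr h0x
      have h1x' : 1 ≤ wt x' := by rw [← hw]; exact h1x
      rw [key x h1x, key x' h1x', hw]
  · -- exchangeable → identity
    intro hp φ hmono h0 h1
    rw [rhs_eq n p φ h0, Finset.sum_filter]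
    apply Finset.sum_congr rfl
    intro x _
    rw [← point_eq n p hp x]
    cases φ x <;> simp

open MeasureTheory
open scoped ProbabilityTheory



open MeasureTheory
open scoped ProbabilityTheory

/-- Theorem 4 (main): for fixed `t > 0`, the signature-based representation
`Pr(φ(χ(t)) = 1) = ∑_{k=1}^n (φ_{n-k+1} - φ_{n-k}) Pr(X_{k:n} > t)`, with
`φ_j = C(n,j)⁻¹ ∑_{|x|=j} φ(x)`, holds for every semicoherent structure function `φ`
iff the component states `χ_1(t), …, χ_n(t)` are exchangeable, i.e. `Pr(χ(t) = x)`
depends only on `|x|`. `(X_{k:n} > t)` is the event that at least `n - k + 1` of the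
`X_i` exceed `t`. -/
theorem stmt_7 (n : ℕ) (hn : 2 ≤ n)
    {Ω : Type*} [MeasureSpace Ω] [IsProbabilityMeasure (ℙ : Measure Ω)]
    (X : Fin n → Ω → ℝ) (hX : ∀ i, Measurable (X i))
    (t : ℝ) (ht : 0 < t) :
    (∀ φ : (Fin n → Bool) → Bool,
        (∀ x y : Fin n → Bool, (∀ i, x i ≤ y i) → φ x ≤ φ y) →
        φ (fun _ => false) = false → φ (fun _ => true) = true →
        (ℙ {ω | φ (fun i => decide (t < X i ω)) = true}).toReal =
          ∑ k ∈ Finset.Icc 1 n,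
            (((n.choose (n - k + 1) : ℝ))⁻¹ *
              (∑ x ∈ Finset.univ.filter
                  (fun x : Fin n → Bool =>
                    (Finset.univ.filter fun i => x i = true).card = n - k + 1),
                (if φ x then (1 : ℝ) else 0)) -
             ((n.choose (n - k) : ℝ))⁻¹ *
              (∑ x ∈ Finset.univ.filter
                  (fun x : Fin n → Bool =>
                    (Finset.univ.filter fun i => x i = true).card = n - k),
                (if φ x then (1 : ℝ) else 0))) *
            (ℙ {ω | n + 1 - k ≤ (Finset.univ.filter fun i => t < X i ω).card}).toReal) ↔
    (∀ x x' : Fin n → Bool,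
        (Finset.univ.filter fun i => x i = true).card =
          (Finset.univ.filter fun i => x' i = true).card →
        ℙ {ω | (fun i => decide (t < X i ω)) = x} =
          ℙ {ω | (fun i => decide (t < X i ω)) = x'}) := by
  classical
  set χ : Ω → (Fin n → Bool) := fun ω i => decide (t < X i ω) with hχdef
  have hχ : Measurable χ := by
    rw [measurable_pi_iff]
    intro i
    have heq : (fun ω => decide (t < X i ω)) = fun ω => if t < X i ω then true else false := by
      funext ω
      by_cases h : t < X i ω <;> simp [h]
    show Measurable fun ω => decide (t < X i ω)
    rw [heq]
    exact Measurable.ite (measurableSet_lt measurable_const (hX i)) measurable_const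
      measurable_const
  set p : (Fin n → Bool) → ℝ := fun x => (ℙ {ω | χ ω = x}).toReal with hpdef
  have hmeas : ∀ x : Fin n → Bool, MeasurableSet {ω | χ ω = x} :=
    fun x => hχ (measurableSet_singleton x)
  have hsum : ∀ S : Finset (Fin n → Bool), (ℙ {ω | χ ω ∈ S}).toReal = ∑ x ∈ S, p x := by
    intro S
    have hset : {ω | χ ω ∈ S} = ⋃ x ∈ S, {ω | χ ω = x} := by
      ext ω; simp
    rw [hset, measure_biUnion_finset ?_ (fun x _ => hmeas x)]
    · exact ENNReal.toReal_sum (fun x _ => measure_ne_top ℙ _)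
    · intro a _ b _ hab
      simp only [Function.onFun]
      apply Set.disjoint_left.mpr
      intro ω hωa hωb
      exact hab (hωa.symm.trans hωb)
  have hwt : ∀ x : Fin n → Bool, (Finset.univ.filter fun i => x i = true).card = wt x :=
    fun _ => rfl
  have h1 : ∀ φ : (Fin n → Bool) → Bool,
      (ℙ {ω | φ (fun i => decide (t < X i ω)) = true}).toReal
        = ∑ x ∈ Finset.univ.filter (fun x : Fin n → Bool => φ x = true), p x := by
    intro φ
    have hset : {ω | φ (fun i => decide (t < X i ω)) = true}
        = {ω | χ ω ∈ Finset.univ.filter (fun x : Fin n → Bool => φ x = true)} := by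
      ext ω; simp [hχdef]
    rw [hset, hsum]
  have hcard : ∀ ω, (Finset.univ.filter fun i => t < X i ω).card = wt (χ ω) := by
    intro ω
    rw [← hwt]
    congr 1
    apply Finset.filter_congr
    intro i _
    simp [hχdef]
  have h2 : ∀ k : ℕ,
      (ℙ {ω | n + 1 - k ≤ (Finset.univ.filter fun i => t < X i ω).card}).toReal
        = ∑ x ∈ Finset.univ.filter (fun x : Fin n → Bool => n + 1 - k ≤ wt x), p x := by
    intro k
    have hset : {ω | n + 1 - k ≤ (Finset.univ.filter fun i => t < X i ω).card}
        = {ω | χ ω ∈ Finset.univ.filter (fun x : Fin n → Bool => n + 1 - k ≤ wt x)} := by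
      ext ω
      simp only [Set.mem_setOf_eq, Finset.mem_filter, Finset.mem_univ, true_and]
      rw [hcard ω]
    rw [hset, hsum]
  have h3 : ∀ x x' : Fin n → Bool,
      (ℙ {ω | (fun i => decide (t < X i ω)) = x} =
        ℙ {ω | (fun i => decide (t < X i ω)) = x'}) ↔ p x = p x' := by
    intro x x'
    exact (ENNReal.toReal_eq_toReal_iff' (measure_ne_top ℙ _) (measure_ne_top ℙ _)).symm
  simp only [hwt, h1, h2, h3]
  exact core n hn p
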